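/- Let Ω ⊆ ℝⁿ (n ≥ 2) be a nonempty, open, bounded set and let G ⊆ Ω be Lebesgue-measurable with P_Ω(G) < ∞. Let ξ_k ↘ 0 and let φ_k : Ω → ℝ (k = 1, 2, …) be continuously differentiable with x ↦ |∇φ_k(x)|² and x ↦ W(φ_k(x)) Lebesgue integrable on Ω. Assume φ_k → χ_G almost everywhere in Ω and sup_{k ≥ 1} ∫_Ω [(ξ_k/2)|∇φ_k|² + W(φ_k)/ξ_k] dx < ∞. Define η_k(x) := ∫₀^{φ_k(x)} √(2 W(t)) dt. Then P_Ω(G) ≤ liminf_{k→∞} ∫_Ω |∇η_k| dx ≤ liminf_{k→∞} ∫_Ω [(ξ_k/2)|∇φ_k|² + W(φ_k)/ξ_k] dx. -/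

import Mathlib

open MeasureTheory Filter Topology RealInnerProductSpace

/-- The quartic double-well potential `W(s) = 18 s² (1-s)²`. -/
noncomputable def W (s : ℝ) : ℝ := 18 * s ^ 2 * (1 - s) ^ 2

/-- Divergence of a vector field on `ℝⁿ`. -/
noncomputable def vdiv {n : ℕ} (g : EuclideanSpace ℝ (Fin n) → EuclideanSpace ℝ (Fin n))
    (x : EuclideanSpace ℝ (Fin n)) : ℝ :=
  ∑ i, fderiv ℝ g x (EuclideanSpace.single i 1) i

/-- The set of numbers `∫_G div g` over admissible test vector fields `g` (C¹, compactly
supported in `Ω`, with `|g| ≤ 1`), whose supremum is the perimeter of `G` in `Ω`. -/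
noncomputable def perimSet {n : ℕ} (Ω G : Set (EuclideanSpace ℝ (Fin n))) : Set ℝ :=
  { r | ∃ g : EuclideanSpace ℝ (Fin n) → EuclideanSpace ℝ (Fin n),
      ContDiff ℝ 1 g ∧ HasCompactSupport g ∧ tsupport g ⊆ Ω ∧
      (∀ x, ‖g x‖ ≤ 1) ∧ r = ∫ x in G, vdiv g x }

/-- The perimeter `P_Ω(G)` of `G` in `Ω`. -/
noncomputable def perim {n : ℕ} (Ω G : Set (EuclideanSpace ℝ (Fin n))) : ℝ :=
  sSup (perimSet Ω G)

/-- `η_k(x) = ∫₀^{φ_k(x)} √(2W(t)) dt`. -/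
noncomputable def etaFn {n : ℕ} (φ : ℕ → EuclideanSpace ℝ (Fin n) → ℝ) (k : ℕ)
    (x : EuclideanSpace ℝ (Fin n)) : ℝ :=
  ∫ t in (0 : ℝ)..(φ k x), Real.sqrt (2 * W t)

/-! ### Auxiliary development: the clamped optimal profile `eta` -/

lemma W_nonneg (s : ℝ) : 0 ≤ W s := by unfold W; positivity

lemma W_continuous : Continuous W := by unfold W; fun_prop

/-- The derivative of the clamped optimal profile. -/
noncomputable def psi (t : ℝ) : ℝ := Real.sqrt (2 * W (min (max t 0) 1))

lemma psi_nonneg (t : ℝ) : 0 ≤ psi t := Real.sqrt_nonneg _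

lemma W_clamp_le (t : ℝ) : W (min (max t 0) 1) ≤ W t := by
  rcases le_total t 0 with h | h
  · rw [max_eq_right h, min_eq_left (by norm_num)]
    unfold W; nlinarith [sq_nonneg t, sq_nonneg (1 - t), sq_nonneg (t * (1 - t)), sq_nonneg (t*t)]
  · rw [max_eq_left h]
    rcases le_total t 1 with h1 | h1
    · rw [min_eq_left h1]
    · rw [min_eq_right h1]
      unfold W; nlinarith [sq_nonneg t, sq_nonneg (1 - t), sq_nonneg (t * (1 - t))]

lemma psi_le (t : ℝ) : psi t ≤ Real.sqrt (2 * W t) :=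
  Real.sqrt_le_sqrt (by linarith [W_clamp_le t])

lemma psi_continuous : Continuous psi := by
  unfold psi W
  fun_prop

lemma psi_eq_of_mem (t : ℝ) (h0 : 0 ≤ t) (h1 : t ≤ 1) : psi t = 6 * (t - t^2) := by
  unfold psi
  rw [max_eq_left h0, min_eq_left h1]
  have : 2 * W t = (6 * (t - t^2))^2 := by unfold W; ring
  rw [this, Real.sqrt_sq_eq_abs, abs_of_nonneg (by nlinarith)]

lemma psi_eq_zero_of_nonpos (t : ℝ) (h : t ≤ 0) : psi t = 0 := by
  unfold psi
  rw [max_eq_right h, min_eq_left (by norm_num)]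
  simp [W]

lemma psi_eq_zero_of_one_le (t : ℝ) (h : 1 ≤ t) : psi t = 0 := by
  unfold psi
  rw [max_eq_left (le_trans zero_le_one h), min_eq_right h]
  simp [W]

/-- The clamped optimal profile: `eta s = ∫₀ˢ ψ`, where `ψ` is the clamped `√(2W)`. -/
noncomputable def eta (s : ℝ) : ℝ := ∫ t in (0:ℝ)..s, psi t

lemma eta_hasDerivAt (s : ℝ) : HasDerivAt eta (psi s) s :=
  intervalIntegral.integral_hasDerivAt_right (psi_continuous.intervalIntegrable _ _)
    (psi_continuous.stronglyMeasurableAtFilter _ _) psi_continuous.continuousAt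

lemma eta_contDiff : ContDiff ℝ 1 eta := by
  rw [contDiff_one_iff_deriv]
  refine ⟨fun s => (eta_hasDerivAt s).differentiableAt, ?_⟩
  have : deriv eta = psi := funext fun s => (eta_hasDerivAt s).deriv
  rw [this]; exact psi_continuous

lemma eta_mono : Monotone eta :=
  monotone_of_deriv_nonneg (fun s => (eta_hasDerivAt s).differentiableAt)
    (fun s => by rw [(eta_hasDerivAt s).deriv]; exact psi_nonneg s)

lemma eta_zero : eta 0 = 0 := by simp [eta]

lemma eta_one : eta 1 = 1 := by
  unfold eta
  rw [intervalIntegral.integral_congr (g := fun t => 6 * (t - t^2))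
    (fun t ht => by
      rw [Set.uIcc_of_le (by norm_num : (0:ℝ) ≤ 1)] at ht
      exact psi_eq_of_mem t ht.1 ht.2)]
  have : ∀ t : ℝ, HasDerivAt (fun u : ℝ => 3*u^2 - 2*u^3) (6 * (t - t^2)) t := by
    intro t
    have h := (((hasDerivAt_pow 2 t).const_mul 3).fun_sub ((hasDerivAt_pow 3 t).const_mul 2))
    exact h.congr_deriv (by push_cast; ring)
  rw [intervalIntegral.integral_eq_sub_of_hasDerivAt (fun t _ => this t)
    (Continuous.intervalIntegrable (by fun_prop) _ _)]
  norm_num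

lemma eta_eq_zero_of_nonpos (s : ℝ) (h : s ≤ 0) : eta s = 0 := by
  unfold eta
  rw [← neg_neg (∫ t in (0:ℝ)..s, psi t), intervalIntegral.integral_symm]
  rw [intervalIntegral.integral_congr (g := fun _ => (0:ℝ))
    (fun t ht => by
      rw [Set.uIcc_of_le h] at ht
      exact psi_eq_zero_of_nonpos t ht.2)]
  simp

lemma eta_eq_one_of_one_le (s : ℝ) (h : 1 ≤ s) : eta s = 1 := by
  have split : eta s = eta 1 + ∫ t in (1:ℝ)..s, psi t := by
    unfold eta
    rw [intervalIntegral.integral_add_adjacent_intervals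
      (psi_continuous.intervalIntegrable _ _) (psi_continuous.intervalIntegrable _ _)]
  rw [split, eta_one,
    intervalIntegral.integral_congr (g := fun _ => (0:ℝ))
    (fun t ht => by
      rw [Set.uIcc_of_le h] at ht
      exact psi_eq_zero_of_one_le t ht.1)]
  simp

lemma eta_mem (s : ℝ) : 0 ≤ eta s ∧ eta s ≤ 1 := by
  rcases le_total s 0 with h | h
  · rw [eta_eq_zero_of_nonpos s h]; norm_num
  rcases le_total 1 s with h1 | h1
  · rw [eta_eq_one_of_one_le s h1]; norm_num
  · exact ⟨eta_zero ▸ eta_mono h, eta_one ▸ eta_mono h1⟩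

lemma abs_eta_le_one (s : ℝ) : |eta s| ≤ 1 :=
  abs_le.2 ⟨by linarith [(eta_mem s).1], (eta_mem s).2⟩

/-! ### Auxiliary development: divergence theorem for compactly supported `C¹` fields -/

lemma fderiv_eq_zero_of_nmem_tsupport {E F : Type*} [NormedAddCommGroup E] [NormedSpace ℝ E]
    [NormedAddCommGroup F] [NormedSpace ℝ F] {f : E → F} {x : E} (hx : x ∉ tsupport f) :
    fderiv ℝ f x = 0 := by
  have h0 : f =ᶠ[𝓝 x] (fun _ => 0) := by
    filter_upwards [(isOpen_compl_iff.2 (isClosed_tsupport f)).mem_nhds hx] with y hy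
    exact image_eq_zero_of_notMem_tsupport hy
  rw [h0.fderiv_eq, fderiv_fun_const]
  rfl

lemma vdiv_continuous {n : ℕ} {g : EuclideanSpace ℝ (Fin n) → EuclideanSpace ℝ (Fin n)}
    (hg : ContDiff ℝ 1 g) : Continuous (vdiv g) := by
  have h := hg.continuous_fderiv one_ne_zero
  exact continuous_finset_sum _ fun i _ =>
    (EuclideanSpace.proj i).continuous.comp (h.clm_apply continuous_const)

lemma abs_coord_le_norm {n : ℕ} (x : EuclideanSpace ℝ (Fin n)) (i : Fin n) : |x i| ≤ ‖x‖ := by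
  rw [EuclideanSpace.norm_eq x, ← Real.sqrt_sq_eq_abs]
  apply Real.sqrt_le_sqrt
  exact (Finset.single_le_sum (f := fun j => ‖x j‖^2) (fun j _ => by positivity)
    (Finset.mem_univ i)).trans_eq' (by rw [Real.norm_eq_abs, sq_abs])

lemma integral_vdiv_eq_zero {m : ℕ}
    (F : EuclideanSpace ℝ (Fin (m+1)) → EuclideanSpace ℝ (Fin (m+1)))
    (hF : ContDiff ℝ 1 F) (hsupp : HasCompactSupport F) :
    ∫ x, vdiv F x = 0 := by
  set e := EuclideanSpace.equiv (Fin (m+1)) ℝ with he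
  obtain ⟨R, hR0, hRsub⟩ : ∃ R, 0 ≤ R ∧ tsupport F ⊆ Metric.closedBall 0 R := by
    obtain ⟨R, hR⟩ := hsupp.isBounded.subset_closedBall 0
    exact ⟨max R 0, le_max_right _ _,
      hR.trans (Metric.closedBall_subset_closedBall (le_max_left _ _))⟩
  set a : Fin (m+1) → ℝ := fun _ => -(R+1) with ha
  set b : Fin (m+1) → ℝ := fun _ => R+1 with hb
  have hle : a ≤ b := fun i => by simp only [ha, hb]; linarith
  have hFout : ∀ x : EuclideanSpace ℝ (Fin (m+1)), R < ‖x‖ → F x = 0 := by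
    intro x hx
    apply image_eq_zero_of_notMem_tsupport
    intro hmem
    exact absurd (hRsub hmem) (by simp only [Metric.mem_closedBall, dist_zero_right]; linarith)
  have hfderivout : ∀ x : EuclideanSpace ℝ (Fin (m+1)), R < ‖x‖ → fderiv ℝ F x = 0 := by
    intro x hx
    apply fderiv_eq_zero_of_nmem_tsupport
    intro hmem
    exact absurd (hRsub hmem) (by simp only [Metric.mem_closedBall, dist_zero_right]; linarith)
  have hdiff : Differentiable ℝ F := hF.differentiable one_ne_zero
  set f' : (Fin (m+1) → ℝ) → (Fin (m+1) → ℝ) →L[ℝ] (Fin (m+1) → ℝ) := fun y =>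
    ((e : EuclideanSpace ℝ (Fin (m+1)) →L[ℝ] (Fin (m+1) → ℝ)).comp
      ((fderiv ℝ F (e.symm y)).comp
        ((e.symm : (Fin (m+1) → ℝ) ≃L[ℝ] EuclideanSpace ℝ (Fin (m+1))) :
          (Fin (m+1) → ℝ) →L[ℝ] EuclideanSpace ℝ (Fin (m+1))))) with hf'
  have hdiv_eq : ∀ y : Fin (m+1) → ℝ,
      (∑ i, f' y (Pi.single i 1) i) = vdiv F (e.symm y) := by
    intro y
    unfold vdiv
    apply Finset.sum_congr rfl
    intro i _
    have h1 : (e.symm : (Fin (m+1) → ℝ) → _) (Pi.single i 1) = EuclideanSpace.single i 1 := rfl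
    simp only [hf', ContinuousLinearMap.comp_apply, ContinuousLinearEquiv.coe_coe, h1]
    rfl
  have hmp : MeasurePreserving (⇑(MeasurableEquiv.toLp 2 (Fin (m+1) → ℝ)))
      volume volume := (EuclideanSpace.volume_preserving_symm_measurableEquiv_toLp (Fin (m+1))).symm
  have hcoe : ⇑(MeasurableEquiv.toLp 2 (Fin (m+1) → ℝ)) = ⇑(e.symm) := rfl
  have hcont_div : Continuous fun y => vdiv F (e.symm y) :=
    (vdiv_continuous hF).comp e.symm.continuous
  have key := MeasureTheory.integral_divergence_of_hasFDerivAt_off_countable a b hle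
    (fun y => e (F (e.symm y))) f' ∅ Set.countable_empty
    ((e.continuous.comp (hF.continuous.comp e.symm.continuous)).continuousOn)
    (by
      rintro x ⟨-, -⟩
      exact (e.toContinuousLinearMap.hasFDerivAt).comp _
        (((hdiff (e.symm x)).hasFDerivAt).comp _ e.symm.toContinuousLinearMap.hasFDerivAt))
    (by
      have : (fun x => ∑ i, f' x (Pi.single i 1) i) = fun y => vdiv F (e.symm y) :=
        funext hdiv_eq
      rw [this]
      exact hcont_div.continuousOn.integrableOn_compact isCompact_Icc)
  have hbd : ∀ (i : Fin (m+1)) (c : ℝ), R < |c| → ∀ x : Fin m → ℝ,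
      (e (F (e.symm (i.insertNth c x))) i) = 0 := by
    intro i c hc x
    have hnorm : R < ‖e.symm (i.insertNth c x)‖ := by
      have h1 : |(e.symm (i.insertNth c x) : EuclideanSpace ℝ (Fin (m+1))) i| ≤
          ‖(e.symm (i.insertNth c x) : EuclideanSpace ℝ (Fin (m+1)))‖ := abs_coord_le_norm _ i
      have h2 : (e.symm (i.insertNth c x) : EuclideanSpace ℝ (Fin (m+1))) i = c := by
        exact Fin.insertNth_apply_same (α := fun _ => ℝ) i c x
      rw [h2] at h1
      linarith
    rw [hFout _ hnorm]
    rfl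
  rw [funext hdiv_eq] at key
  have hbzero : ∀ i : Fin (m+1),
      ((∫ (x : Fin m → ℝ) in Set.Icc (a ∘ i.succAbove) (b ∘ i.succAbove),
          e (F (e.symm (i.insertNth (b i) x))) i) -
        ∫ (x : Fin m → ℝ) in Set.Icc (a ∘ i.succAbove) (b ∘ i.succAbove),
          e (F (e.symm (i.insertNth (a i) x))) i) = 0 := by
    intro i
    have h1 : ∀ x : Fin m → ℝ, e (F (e.symm (i.insertNth (b i) x))) i = 0 :=
      hbd i (b i) (by simp only [hb]; rw [abs_of_nonneg (by linarith)]; linarith)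
    have h2 : ∀ x : Fin m → ℝ, e (F (e.symm (i.insertNth (a i) x))) i = 0 :=
      hbd i (a i) (by simp only [ha]; rw [abs_neg, abs_of_nonneg (by linarith)]; linarith)
    simp only [h1, h2]
    simp
  rw [Finset.sum_congr rfl (fun i _ => hbzero i), Finset.sum_const, smul_zero] at key
  have hout : ∀ y : Fin (m+1) → ℝ, y ∉ Set.Icc a b → vdiv F (e.symm y) = 0 := by
    intro y hy
    have : ∃ i, R + 1 ≤ |y i| := by
      by_contra hcon
      push_neg at hcon
      exact hy ⟨fun i => by have := hcon i; rw [abs_lt] at this; simp only [ha]; linarith,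
        fun i => by have := hcon i; rw [abs_lt] at this; simp only [hb]; linarith⟩
    obtain ⟨i, hi⟩ := this
    have hnorm : R < ‖e.symm y‖ := by
      have h1 : |(e.symm y : EuclideanSpace ℝ (Fin (m+1))) i| ≤
          ‖(e.symm y : EuclideanSpace ℝ (Fin (m+1)))‖ := abs_coord_le_norm _ i
      have h2 : (e.symm y : EuclideanSpace ℝ (Fin (m+1))) i = y i := rfl
      rw [h2] at h1
      linarith
    unfold vdiv
    rw [Finset.sum_eq_zero]
    intro j _
    rw [hfderivout _ hnorm]
    rfl
  rw [setIntegral_eq_integral_of_forall_compl_eq_zero hout] at key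
  have := hmp.integral_comp (MeasurableEquiv.toLp 2 (Fin (m+1) → ℝ)).measurableEmbedding
    (vdiv F)
  rw [hcoe] at this
  rw [← this]
  exact key

lemma clm_apply_eq_sum {n : ℕ} (L : EuclideanSpace ℝ (Fin n) →L[ℝ] ℝ)
    (v : EuclideanSpace ℝ (Fin n)) : L v = ∑ i, v i * L (EuclideanSpace.single i 1) := by
  conv_lhs => rw [← (EuclideanSpace.basisFun (Fin n) ℝ).sum_repr v]
  rw [map_sum]
  refine Finset.sum_congr rfl fun i _ => ?_
  rw [L.map_smul]
  simp [EuclideanSpace.basisFun_apply, EuclideanSpace.basisFun_repr, smul_eq_mul]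

/-- Integration by parts in `Ω` against a compactly supported test field. -/
lemma integral_parts {m : ℕ} {Ω : Set (EuclideanSpace ℝ (Fin (m+1)))} (hΩopen : IsOpen Ω)
    {g : EuclideanSpace ℝ (Fin (m+1)) → EuclideanSpace ℝ (Fin (m+1))}
    (hg1 : ContDiff ℝ 1 g) (hg2 : HasCompactSupport g) (hg3 : tsupport g ⊆ Ω)
    {u : EuclideanSpace ℝ (Fin (m+1)) → ℝ} (hu : ContDiffOn ℝ 1 u Ω)
    (h1 : IntegrableOn (fun x => u x * vdiv g x) Ω)
    (h2 : IntegrableOn (fun x => fderiv ℝ u x (g x)) Ω) :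
    ∫ x in Ω, u x * vdiv g x = - ∫ x in Ω, fderiv ℝ u x (g x) := by
  set F : EuclideanSpace ℝ (Fin (m+1)) → EuclideanSpace ℝ (Fin (m+1)) :=
    fun y => u y • g y with hF
  have hsuppF : Function.support F ⊆ tsupport g := fun x hx => by
    by_contra hmem
    exact hx (by rw [hF]; simp [image_eq_zero_of_notMem_tsupport hmem])
  have hFsupp : HasCompactSupport F := hg2.mono' hsuppF
  have hFC1 : ContDiff ℝ 1 F := by
    rw [contDiff_iff_contDiffAt]
    intro x
    by_cases hx : x ∈ Ω
    · have huat : ContDiffAt ℝ 1 u x := hu.contDiffAt (hΩopen.mem_nhds hx)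
      exact huat.smul hg1.contDiffAt
    · have hx' : x ∉ tsupport g := fun h => hx (hg3 h)
      have hev : F =ᶠ[𝓝 x] (fun _ => 0) := by
        filter_upwards [(isOpen_compl_iff.2 (isClosed_tsupport g)).mem_nhds hx'] with y hy
        have : g y = 0 := image_eq_zero_of_notMem_tsupport hy
        simp [hF, this]
      exact contDiffAt_const.congr_of_eventuallyEq hev
  have key : ∫ x, vdiv F x = 0 := integral_vdiv_eq_zero F hFC1 hFsupp
  have hvdiv_in : ∀ x ∈ Ω, vdiv F x = u x * vdiv g x + fderiv ℝ u x (g x) := by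
    intro x hx
    have hud : DifferentiableAt ℝ u x :=
      (hu.contDiffAt (hΩopen.mem_nhds hx)).differentiableAt one_ne_zero
    have hgd : DifferentiableAt ℝ g x := hg1.differentiable one_ne_zero x
    have hDF : HasFDerivAt F
        (u x • fderiv ℝ g x + (fderiv ℝ u x).smulRight (g x)) x :=
      hud.hasFDerivAt.smul hgd.hasFDerivAt
    rw [vdiv, Finset.sum_congr rfl (fun i _ => by rw [hDF.fderiv])]
    have expand : ∀ i : Fin (m+1),
        ((u x • fderiv ℝ g x + (fderiv ℝ u x).smulRight (g x))
          (EuclideanSpace.single i 1)) i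
        = u x * (fderiv ℝ g x (EuclideanSpace.single i 1)) i
          + fderiv ℝ u x (EuclideanSpace.single i 1) * g x i := by
      intro i
      simp [ContinuousLinearMap.smulRight_apply, smul_eq_mul]
    rw [Finset.sum_congr rfl (fun i _ => expand i), Finset.sum_add_distrib,
      ← Finset.mul_sum]
    rw [clm_apply_eq_sum (fderiv ℝ u x) (g x)]
    unfold vdiv
    congr 1
    exact Finset.sum_congr rfl fun i _ => by ring
  have hvdiv_out : ∀ x ∉ Ω, vdiv F x = 0 := by
    intro x hx
    have hx' : x ∉ tsupport F :=
      fun h => hx (hg3 (closure_minimal hsuppF (isClosed_tsupport g) h))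
    rw [vdiv, Finset.sum_eq_zero]
    intro i _
    rw [fderiv_eq_zero_of_nmem_tsupport hx']
    rfl
  rw [← setIntegral_eq_integral_of_forall_compl_eq_zero hvdiv_out] at key
  rw [setIntegral_congr_fun hΩopen.measurableSet hvdiv_in, integral_add h1 h2] at key
  linarith

/-- The pointwise Modica–Mortola (AM–GM) inequality. -/
lemma amgm_ineq {ξ a : ℝ} (hξ : 0 < ξ) (_ha : 0 ≤ a) (s : ℝ) :
    Real.sqrt (2 * W s) * a ≤ ξ / 2 * a ^ 2 + W s / ξ := by
  set b := Real.sqrt (2 * W s) with hb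
  have hb0 : 0 ≤ b := Real.sqrt_nonneg _
  have hb2 : b ^ 2 = 2 * W s := Real.sq_sqrt (by linarith [W_nonneg s])
  have hWs : W s = b ^ 2 / 2 := by rw [hb2]; ring
  rw [hWs]
  have key : ξ * (ξ / 2 * a ^ 2 + b ^ 2 / 2 / ξ - b * a) = (ξ * a - b) ^ 2 / 2 := by
    field_simp
    ring
  have h0 : 0 ≤ ξ * (ξ / 2 * a ^ 2 + b ^ 2 / 2 / ξ - b * a) := key ▸ by positivity
  have := (mul_nonneg_iff_of_pos_left hξ).mp h0
  linarith

lemma norm_gradient_eq {n : ℕ} (f : EuclideanSpace ℝ (Fin n) → ℝ) (x : EuclideanSpace ℝ (Fin n)) :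
    ‖gradient f x‖ = ‖fderiv ℝ f x‖ := by simp [gradient]

theorem perimeter_le_liminf {n : ℕ} (hn : 2 ≤ n)
    (Ω : Set (EuclideanSpace ℝ (Fin n))) (hΩne : Ω.Nonempty) (hΩopen : IsOpen Ω)
    (hΩbdd : Bornology.IsBounded Ω)
    (G : Set (EuclideanSpace ℝ (Fin n))) (hGmeas : MeasurableSet G) (hGΩ : G ⊆ Ω)
    (hPfin : BddAbove (perimSet Ω G))
    (ξ : ℕ → ℝ) (hξpos : ∀ k, 0 < ξ k) (hξanti : StrictAnti ξ)
    (hξ0 : Tendsto ξ atTop (𝓝 0))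
    (φ : ℕ → EuclideanSpace ℝ (Fin n) → ℝ)
    (hφ : ∀ k, ContDiffOn ℝ 1 (φ k) Ω)
    (hgradInt : ∀ k, IntegrableOn (fun x => ‖gradient (φ k) x‖ ^ 2) Ω)
    (hWInt : ∀ k, IntegrableOn (fun x => W (φ k x)) Ω)
    (hae : ∀ᵐ x ∂(volume.restrict Ω),
      Tendsto (fun k => φ k x) atTop (𝓝 (G.indicator (fun _ => (1 : ℝ)) x)))
    (hsup : ∃ C : ℝ, ∀ k,
      (∫ x in Ω, (ξ k / 2 * ‖gradient (φ k) x‖ ^ 2 + W (φ k x) / ξ k)) ≤ C) :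
    perim Ω G ≤
      liminf (fun k => ∫ x in Ω, Real.sqrt (2 * W (φ k x)) * ‖gradient (φ k) x‖) atTop ∧
    liminf (fun k => ∫ x in Ω, Real.sqrt (2 * W (φ k x)) * ‖gradient (φ k) x‖) atTop ≤
      liminf (fun k => ∫ x in Ω, (ξ k / 2 * ‖gradient (φ k) x‖ ^ 2 + W (φ k x) / ξ k))
        atTop := by
  obtain ⟨m, rfl⟩ : ∃ m, n = m + 1 := ⟨n - 1, by omega⟩
  have hΩmeas : MeasurableSet Ω := hΩopen.measurableSet
  have hfin : volume Ω < ⊤ := hΩbdd.measure_lt_top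
  obtain ⟨Cs, hCs⟩ := hsup
  -- notation for the two integrand families
  set A : ℕ → ℝ := fun k => ∫ x in Ω, Real.sqrt (2 * W (φ k x)) * ‖gradient (φ k) x‖ with hA
  set B : ℕ → ℝ := fun k =>
    ∫ x in Ω, (ξ k / 2 * ‖gradient (φ k) x‖ ^ 2 + W (φ k x) / ξ k) with hB
  -- integrability of the Modica-Mortola energy integrand
  have hBint : ∀ k, IntegrableOn
      (fun x => ξ k / 2 * ‖gradient (φ k) x‖ ^ 2 + W (φ k x) / ξ k) Ω :=
    fun k => ((hgradInt k).const_mul _).add ((hWInt k).div_const _)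
  -- measurability of the gradient norm
  have hgradm : ∀ k, AEStronglyMeasurable (fun x => ‖gradient (φ k) x‖)
      (volume.restrict Ω) := by
    intro k
    have h := Real.continuous_sqrt.comp_aestronglyMeasurable (hgradInt k).aestronglyMeasurable
    exact h.congr (Eventually.of_forall fun x => by
      simp [Real.sqrt_sq (norm_nonneg _)])
  have hWm : ∀ k, AEStronglyMeasurable (fun x => Real.sqrt (2 * W (φ k x)))
      (volume.restrict Ω) := by
    intro k
    have hc : Continuous fun s : ℝ => Real.sqrt (2 * W s) := by
      exact Real.continuous_sqrt.comp (continuous_const.mul W_continuous)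
    exact (hc.comp_continuousOn (hφ k).continuousOn).aestronglyMeasurable hΩmeas
  have hamgm : ∀ k x, Real.sqrt (2 * W (φ k x)) * ‖gradient (φ k) x‖ ≤
      ξ k / 2 * ‖gradient (φ k) x‖ ^ 2 + W (φ k x) / ξ k :=
    fun k x => amgm_ineq (hξpos k) (norm_nonneg _) (φ k x)
  have hAint : ∀ k, IntegrableOn
      (fun x => Real.sqrt (2 * W (φ k x)) * ‖gradient (φ k) x‖) Ω := by
    intro k
    refine (hBint k).mono' ((hWm k).mul (hgradm k)) (Eventually.of_forall fun x => ?_)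
    rw [Real.norm_eq_abs, abs_of_nonneg (by positivity)]
    exact hamgm k x
  have hA0 : ∀ k, 0 ≤ A k := fun k => integral_nonneg fun x => by positivity
  have hAboundedBelow : IsBoundedUnder (· ≥ ·) atTop A := isBoundedUnder_of ⟨0, hA0⟩
  have hAB : ∀ k, A k ≤ B k := fun k => integral_mono (hAint k) (hBint k) (hamgm k)
  have hBcobounded : IsCoboundedUnder (· ≥ ·) atTop B :=
    (isBoundedUnder_of ⟨Cs, hCs⟩).isCoboundedUnder_ge
  have hAcobounded : IsCoboundedUnder (· ≥ ·) atTop A :=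
    (isBoundedUnder_of ⟨Cs, fun k => (hAB k).trans (hCs k)⟩).isCoboundedUnder_ge
  constructor
  · -- main perimeter bound
    apply csSup_le
    · -- perimSet is nonempty: take `g = 0`
      refine ⟨0, fun _ => 0, contDiff_const, ?_, ?_, fun x => by simp, ?_⟩
      · have hz : (Function.support fun _ : EuclideanSpace ℝ (Fin (m+1)) =>
            (0 : EuclideanSpace ℝ (Fin (m+1)))) = ∅ := by simp
        rw [HasCompactSupport, tsupport, hz, closure_empty]
        exact isCompact_empty
      · have hz : (Function.support fun _ : EuclideanSpace ℝ (Fin (m+1)) =>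
            (0 : EuclideanSpace ℝ (Fin (m+1)))) = ∅ := by simp
        rw [tsupport, hz, closure_empty]
        exact Set.empty_subset _
      · symm
        have : ∀ x, vdiv (fun _ : EuclideanSpace ℝ (Fin (m+1)) => (0 : _)) x = 0 := by
          intro x
          unfold vdiv
          rw [Finset.sum_eq_zero]
          intro i _
          rw [fderiv_fun_const]
          rfl
        rw [funext this]
        simp
    rintro r ⟨g, hg1, hg2, hg3, hg4, rfl⟩
    -- bound for `vdiv g`
    have hdivsupp : HasCompactSupport (vdiv g) := by
      apply hg2.mono'
      intro x hx
      by_contra hmem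
      apply hx
      unfold vdiv
      rw [Finset.sum_eq_zero]
      intro i _
      rw [fderiv_eq_zero_of_nmem_tsupport hmem]
      rfl
    obtain ⟨C, hC⟩ := hdivsupp.exists_bound_of_continuous (vdiv_continuous hg1)
    have hC0 : 0 ≤ C := le_trans (norm_nonneg _) (hC 0)
    have hbound_int : IntegrableOn (fun _ : EuclideanSpace ℝ (Fin (m+1)) => C) Ω :=
      integrableOn_const hfin.ne
    -- the truncated approximations
    have hukC1 : ∀ k, ContDiffOn ℝ 1 (fun y => eta (φ k y)) Ω :=
      fun k => eta_contDiff.comp_contDiffOn (hφ k)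
    have hukm : ∀ k, AEStronglyMeasurable (fun x => eta (φ k x) * vdiv g x)
        (volume.restrict Ω) := by
      intro k
      exact (((eta_contDiff.continuous.comp_continuousOn (hφ k).continuousOn)).mul
        (vdiv_continuous hg1).continuousOn).aestronglyMeasurable hΩmeas
    have huk_bound : ∀ k, ∀ x, ‖eta (φ k x) * vdiv g x‖ ≤ C := by
      intro k x
      rw [norm_mul]
      have h := mul_le_mul (a := ‖eta (φ k x)‖) (b := 1) (c := ‖vdiv g x‖) (d := C)
        (by rw [Real.norm_eq_abs]; exact abs_eta_le_one _) (hC x)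
        (norm_nonneg _) zero_le_one
      linarith
    have h1int : ∀ k, IntegrableOn (fun x => eta (φ k x) * vdiv g x) Ω :=
      fun k => hbound_int.mono' (hukm k) (Eventually.of_forall (huk_bound k))
    -- chain rule bound for the derivative term
    have hD : ∀ k, ∀ x ∈ Ω, |fderiv ℝ (fun y => eta (φ k y)) x (g x)| ≤
        Real.sqrt (2 * W (φ k x)) * ‖gradient (φ k) x‖ := by
      intro k x hx
      have hφd : DifferentiableAt ℝ (φ k) x :=
        ((hφ k).contDiffAt (hΩopen.mem_nhds hx)).differentiableAt one_ne_zero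
      have hcomp : HasFDerivAt (fun y => eta (φ k y))
          ((ContinuousLinearMap.smulRight (1 : ℝ →L[ℝ] ℝ) (psi (φ k x))).comp
            (fderiv ℝ (φ k) x)) x :=
        (eta_hasDerivAt (φ k x)).hasFDerivAt.comp x hφd.hasFDerivAt
      rw [hcomp.fderiv]
      have happ : ((ContinuousLinearMap.smulRight (1 : ℝ →L[ℝ] ℝ) (psi (φ k x))).comp
          (fderiv ℝ (φ k) x)) (g x) = fderiv ℝ (φ k) x (g x) * psi (φ k x) := by
        simp [ContinuousLinearMap.smulRight_apply, smul_eq_mul]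
      rw [happ, abs_mul, abs_of_nonneg (psi_nonneg _)]
      have h1 : |fderiv ℝ (φ k) x (g x)| ≤ ‖gradient (φ k) x‖ := by
        rw [norm_gradient_eq]
        calc |fderiv ℝ (φ k) x (g x)| ≤ ‖fderiv ℝ (φ k) x‖ * ‖g x‖ :=
          (fderiv ℝ (φ k) x).le_opNorm (g x)
        _ ≤ ‖fderiv ℝ (φ k) x‖ * 1 :=
          mul_le_mul_of_nonneg_left (hg4 x) (norm_nonneg _)
        _ = ‖fderiv ℝ (φ k) x‖ := mul_one _
      calc |fderiv ℝ (φ k) x (g x)| * psi (φ k x)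
          ≤ ‖gradient (φ k) x‖ * psi (φ k x) :=
            mul_le_mul_of_nonneg_right h1 (psi_nonneg _)
        _ ≤ ‖gradient (φ k) x‖ * Real.sqrt (2 * W (φ k x)) :=
            mul_le_mul_of_nonneg_left (psi_le _) (norm_nonneg _)
        _ = Real.sqrt (2 * W (φ k x)) * ‖gradient (φ k) x‖ := mul_comm _ _
    have h2int : ∀ k, IntegrableOn (fun x => fderiv ℝ (fun y => eta (φ k y)) x (g x)) Ω := by
      intro k
      refine (hAint k).mono' ?_ ?_
      · have hcont : ContinuousOn (fun x => fderiv ℝ (fun y => eta (φ k y)) x) Ω := by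
          have h := (hukC1 k).continuousOn_fderivWithin hΩopen.uniqueDiffOn le_rfl
          exact ContinuousOn.congr h (fun x hx => (fderivWithin_of_isOpen hΩopen hx).symm)
        exact (hcont.clm_apply hg1.continuous.continuousOn).aestronglyMeasurable hΩmeas
      · rw [ae_restrict_iff' hΩmeas]
        exact Eventually.of_forall fun x hx => by
          rw [Real.norm_eq_abs]; exact hD k x hx
    -- dominated convergence
    have hDCT : Tendsto (fun k => ∫ x in Ω, eta (φ k x) * vdiv g x) atTop
        (𝓝 (∫ x in Ω, G.indicator (fun _ => (1:ℝ)) x * vdiv g x)) := by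
      apply tendsto_integral_of_dominated_convergence (bound := fun _ => C) hukm hbound_int
        (fun k => Eventually.of_forall (huk_bound k))
      filter_upwards [hae] with x hx
      have h1 : Tendsto (fun k => eta (φ k x)) atTop
          (𝓝 (eta (G.indicator (fun _ => (1:ℝ)) x))) :=
        (eta_contDiff.continuous.tendsto _).comp hx
      have he : eta (G.indicator (fun _ => (1:ℝ)) x) = G.indicator (fun _ => (1:ℝ)) x := by
        by_cases hxG : x ∈ G
        · simp [hxG, eta_one]
        · simp [hxG, eta_zero]
      rw [he] at h1
      exact h1.mul_const _
    have hlim_eq : ∫ x in Ω, G.indicator (fun _ => (1:ℝ)) x * vdiv g x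
        = ∫ x in G, vdiv g x := by
      have h1 : (fun x => G.indicator (fun _ => (1:ℝ)) x * vdiv g x)
          = G.indicator (fun x => vdiv g x) := by
        funext x
        by_cases hxG : x ∈ G <;> simp [hxG]
      rw [h1, integral_indicator hGmeas, Measure.restrict_restrict hGmeas,
        Set.inter_eq_left.2 hGΩ]
    rw [hlim_eq] at hDCT
    -- per-k bound via integration by parts
    have hparts : ∀ k, ∫ x in Ω, eta (φ k x) * vdiv g x ≤ A k := by
      intro k
      rw [integral_parts hΩopen hg1 hg2 hg3 (hukC1 k) (h1int k) (h2int k), ← integral_neg]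
      apply setIntegral_mono_on (h2int k).neg (hAint k) hΩmeas
      intro x hx
      have h2 := abs_le.1 (hD k x hx)
      simp only [Pi.neg_apply]
      linarith [h2.1]
    calc ∫ x in G, vdiv g x
        = liminf (fun k => ∫ x in Ω, eta (φ k x) * vdiv g x) atTop := hDCT.liminf_eq.symm
      _ ≤ liminf A atTop :=
        liminf_le_liminf (Eventually.of_forall hparts) hDCT.isBoundedUnder_ge hAcobounded
  · exact liminf_le_liminf (Eventually.of_forall hAB) hAboundedBelow hBcobounded
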